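/- Let n ≥ 2 be a natural number and let λ > 0, λ_e > 0, λ_m ≥ 0 be real numbers. Suppose v : Fin n → ℝ (indexing nodes 1,…,n) satisfies, for every j, v(j) = (λ_e + λ_m · ∑_{i ≠ j} v(i)) / (λ/n + (n−1)·λ_m). Then v(j) = n·λ_e/λ for every j; in particular the common value is independent of the exchange-mobility rate λ_m. -/

import Mathlib

/-- In a disconnected gossip network with exchange mobility, the steady-state
average version age of every node equals `n·λ_e/λ`, independently of the
exchange-mobility rate `λ_m`. -/
theorem stmt_16 (n : ℕ) (hn : 2 ≤ n) (lam lamE lamM : ℝ)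
    (hlam : 0 < lam) (hlamE : 0 < lamE) (hlamM : 0 ≤ lamM)
    (v : Fin n → ℝ)
    (hv : ∀ j : Fin n,
      v j = (lamE + lamM * ∑ i ∈ Finset.univ.erase j, v i) /
        (lam / n + ((n : ℝ) - 1) * lamM)) :
    ∀ j : Fin n, v j = (n : ℝ) * lamE / lam := by
  have hn2 : (2:ℝ) ≤ (n:ℝ) := by exact_mod_cast hn
  have hn0 : (0:ℝ) < (n:ℝ) := by linarith
  have hD : 0 < lam / n + ((n : ℝ) - 1) * lamM := by
    have h1 : 0 < lam / n := div_pos hlam hn0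
    have h2 : 0 ≤ ((n:ℝ) - 1) * lamM := mul_nonneg (by linarith) hlamM
    linarith
  set S := ∑ i, v i with hS
  have key : ∀ j : Fin n,
      v j * (lam / n + ((n : ℝ) - 1) * lamM + lamM) = lamE + lamM * S := by
    intro j
    have h1 : ∑ i ∈ Finset.univ.erase j, v i = S - v j :=
      Finset.sum_erase_eq_sub (Finset.mem_univ j)
    have h2 := hv j
    rw [h1, eq_div_iff (ne_of_gt hD)] at h2
    linarith [h2]
  have hDp : 0 < lam / n + ((n : ℝ) - 1) * lamM + lamM := by linarith
  intro j
  have heq : ∀ i : Fin n, v i = v j := by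
    intro i
    have := key i
    have h2 := key j
    have := mul_right_cancel₀ (ne_of_gt hDp) (this.trans h2.symm)
    exact this
  have hSval : S = (n:ℝ) * v j := by
    rw [hS]
    rw [Finset.sum_congr rfl (fun i _ => heq i)]
    simp [Finset.sum_const, mul_comm]
  have hk := key j
  rw [hSval] at hk
  have hvj : v j * lam / n = lamE := by ring_nf at hk ⊢; linarith [hk]
  field_simp at hvj ⊢
  linarith [hvj]
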